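/- The sequence m(n) of numbers of peakless Motzkin paths satisfies m(0) = m(1) = m(2) = 1, m(3) = 2, and for every n ≥ 0 the four-term P-recurrence n·m(n) − (2n+3)·m(n+1) − (n+3)·m(n+2) − (2n+9)·m(n+3) + (n+6)·m(n+4) = 0. -/

import Mathlib

/-- Steps of a Motzkin path: up, down, flat. -/
inductive Step : Type
  | U : Step
  | D : Step
  | F : Step
  deriving DecidableEq

instance : Fintype Step :=
  ⟨{Step.U, Step.D, Step.F}, fun x => by cases x <;> simp⟩

/-- The value (vertical displacement) of a step. -/
def Step.val : Step → ℤ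
  | .U => 1
  | .D => -1
  | .F => 0

/-- The partial sum of the first `i` step values of the word `w`. -/
def psum {n : ℕ} (w : Fin n → Step) (i : ℕ) : ℤ :=
  ∑ j : Fin n, if (j : ℕ) < i then (w j).val else 0

/-- A word is peakless if no up-step is immediately followed by a down-step. -/
def Peakless {n : ℕ} (w : Fin n → Step) : Prop :=
  ∀ i : ℕ, ∀ h : i + 1 < n,
    ¬(w ⟨i, Nat.lt_of_succ_lt h⟩ = Step.U ∧ w ⟨i + 1, h⟩ = Step.D)

/-- `w` is a peakless Motzkin path from level `0` to level `k`:
all partial sums are nonnegative, the total sum is `k`, and there is no peak. -/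
def IsPeaklessMotzkinTo {n : ℕ} (w : Fin n → Step) (k : ℤ) : Prop :=
  (∀ i : ℕ, 0 ≤ psum w i) ∧ psum w n = k ∧ Peakless w

/-- The height of a path: the maximum of its partial sums (0 for the empty path). -/
def height {n : ℕ} (w : Fin n → Step) : ℤ :=
  (Finset.range (n + 1)).sup' Finset.nonempty_range_add_one (psum w)

/-- `mTo n k`: the number of peakless Motzkin paths of length `n` from level `0` to level `k`. -/
noncomputable def mTo (n : ℕ) (k : ℤ) : ℕ :=
  Nat.card {w : Fin n → Step // IsPeaklessMotzkinTo w k}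

/-- `m n`: the number of peakless Motzkin paths of length `n`. -/
noncomputable def m (n : ℕ) : ℕ := mTo n 0

/-- `A n ℓ`: the number of peakless Motzkin paths of length `n` of height at most `ℓ`. -/
noncomputable def A (n ℓ : ℕ) : ℕ :=
  Nat.card {w : Fin n → Step // IsPeaklessMotzkinTo w 0 ∧ height w ≤ (ℓ : ℤ)}

namespace PRaux

def R (a b : Step) : Prop := ¬(a = Step.U ∧ b = Step.D)

def lval (l : List Step) : ℤ := (l.map Step.val).sum

@[simp] lemma lval_nil : lval [] = 0 := rfl
@[simp] lemma lval_cons (s : Step) (l : List Step) : lval (s :: l) = s.val + lval l := by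
  simp [lval]
@[simp] lemma lval_append (l₁ l₂ : List Step) : lval (l₁ ++ l₂) = lval l₁ + lval l₂ := by
  simp [lval]

def Ok (l : List Step) : Prop :=
  (∀ k : ℕ, 0 ≤ lval (l.take k)) ∧ lval l = 0 ∧ l.Chain' R

lemma val_ge (s : Step) : -1 ≤ s.val := by cases s <;> simp [Step.val]
lemma val_le (s : Step) : s.val ≤ 1 := by cases s <;> simp [Step.val]

lemma psum_zero {n : ℕ} (w : Fin n → Step) : psum w 0 = 0 := by simp [psum]

lemma psum_succ {n : ℕ} (w : Fin n → Step) (k : ℕ) :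
    psum w (k+1) = psum w k + if h : k < n then (w ⟨k, h⟩).val else 0 := by
  unfold psum
  have key : ∀ j : Fin n, (if (j : ℕ) < k + 1 then (w j).val else 0)
      = (if (j : ℕ) < k then (w j).val else 0) + (if (j : ℕ) = k then (w j).val else 0) := by
    intro j
    rcases lt_trichotomy (j : ℕ) k with h | h | h
    · simp [h, Nat.lt_succ_of_lt h, Nat.ne_of_lt h]
    · simp [h]
    · have h1 : ¬ (j : ℕ) < k + 1 := by omega
      have h2 : ¬ (j : ℕ) < k := by omega
      have h3 : (j : ℕ) ≠ k := by omega
      simp [h1, h2, h3]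
  rw [Finset.sum_congr rfl (fun j _ => key j), Finset.sum_add_distrib]
  congr 1
  by_cases h : k < n
  · rw [dif_pos h, Finset.sum_eq_single (⟨k, h⟩ : Fin n)]
    · simp
    · intro j _ hj
      rw [if_neg]
      exact fun hc => hj (Fin.ext hc)
    · simp
  · rw [dif_neg h]
    apply Finset.sum_eq_zero
    intro j _
    rw [if_neg]
    have := j.isLt
    omega

lemma psum_eq_lval {n : ℕ} (w : Fin n → Step) (k : ℕ) :
    psum w k = lval ((List.ofFn w).take k) := by
  induction k with
  | zero => simp [psum_zero]
  | succ k ih =>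
    rw [psum_succ, ih]
    by_cases h : k < n
    · rw [dif_pos h]
      have hlen : k < (List.ofFn w).length := by simpa using h
      rw [List.take_succ, List.getElem?_eq_getElem hlen]
      simp [List.getElem_ofFn]
    · rw [dif_neg h]
      have hlen : (List.ofFn w).length ≤ k := by simpa using Nat.le_of_not_lt h
      rw [List.take_of_length_le hlen, List.take_of_length_le (hlen.trans (Nat.le_succ k)),
        add_zero]

lemma peakless_iff {n : ℕ} (w : Fin n → Step) : Peakless w ↔ (List.ofFn w).Chain' R := by
  unfold List.Chain'
  rw [List.isChain_iff_getElem]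
  constructor
  · intro hp i h
    have hn : i + 1 < n := by simpa using h
    simp only [List.getElem_ofFn]
    exact hp i hn
  · intro hc i h
    have h' : i + 1 < (List.ofFn w).length := by simpa using h
    have := hc i h'
    simp only [List.getElem_ofFn] at this
    exact this

lemma isPMT_iff {n : ℕ} (w : Fin n → Step) :
    IsPeaklessMotzkinTo w 0 ↔ Ok (List.ofFn w) := by
  unfold IsPeaklessMotzkinTo Ok
  rw [peakless_iff]
  constructor
  · rintro ⟨h1, h2, h3⟩
    refine ⟨fun k => ?_, ?_, h3⟩
    · rw [← psum_eq_lval]; exact h1 k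
    · have : (List.ofFn w).take n = List.ofFn w := by
        apply List.take_of_length_le; simp
      rw [← this, ← psum_eq_lval]; exact h2
  · rintro ⟨h1, h2, h3⟩
    refine ⟨fun i => ?_, ?_, h3⟩
    · rw [psum_eq_lval]; exact h1 i
    · rw [psum_eq_lval]
      have : (List.ofFn w).take n = List.ofFn w := by
        apply List.take_of_length_le; simp
      rw [this]; exact h2

noncomputable def listEquiv (n : ℕ) :
    {w : Fin n → Step // IsPeaklessMotzkinTo w 0} ≃ {l : List Step // l.length = n ∧ Ok l} where
  toFun w := ⟨List.ofFn w.1, by simp, (isPMT_iff w.1).1 w.2⟩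
  invFun l := ⟨fun i => l.1.get (Fin.cast l.2.1.symm i), by
    rw [isPMT_iff]
    have : List.ofFn (fun i : Fin n => l.1.get (Fin.cast l.2.1.symm i)) = l.1 := by
      obtain ⟨l, hl, hok⟩ := l
      subst hl
      simpa using List.ofFn_get l
    rw [this]
    exact l.2.2⟩
  left_inv w := by
    apply Subtype.ext
    funext i
    simp [List.get_ofFn]
  right_inv l := by
    apply Subtype.ext
    obtain ⟨l, hl, hok⟩ := l
    subst hl
    simpa using List.ofFn_get l

instance (n : ℕ) : Finite {l : List Step // l.length = n ∧ Ok l} :=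
  Finite.of_equiv _ (listEquiv n)

lemma m_eq (n : ℕ) : m n = Nat.card {l : List Step // l.length = n ∧ Ok l} :=
  Nat.card_congr (listEquiv n)


lemma lval_take_succ (t : List Step) (k : ℕ) (h : k < t.length) :
    lval (t.take (k+1)) = lval (t.take k) + (t.get ⟨k, h⟩).val := by
  rw [List.take_succ, List.getElem?_eq_getElem h, Option.toList_some, lval_append,
    lval_cons, lval_nil, List.get_eq_getElem]
  ring

lemma take_ge_neg_one {t : List Step}
    (hpre : ∀ k : ℕ, 0 ≤ lval ((Step.U :: t).take k)) (k : ℕ) :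
    -1 ≤ lval (t.take k) := by
  have h := hpre (k+1)
  rw [List.take_succ_cons, lval_cons] at h
  simp [Step.val] at h
  omega

lemma exists_split {t : List Step}
    (hpre : ∀ k : ℕ, 0 ≤ lval ((Step.U :: t).take k))
    (hsum : lval (Step.U :: t) = 0) :
    ∃ v u : List Step, t = v ++ Step.D :: u ∧
      (∀ k, 0 ≤ lval (v.take k)) ∧ lval v = 0 ∧
      (∀ k, 0 ≤ lval (u.take k)) ∧ lval u = 0 := by
  have hsumt : lval t = -1 := by
    rw [lval_cons] at hsum; simp [Step.val] at hsum; omega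
  have hex : ∃ k, lval (t.take k) = -1 :=
    ⟨t.length, by rw [List.take_length]; exact hsumt⟩
  classical
  set c := Nat.find hex with hc_def
  have hc : lval (t.take c) = -1 := Nat.find_spec hex
  have hmin : ∀ k < c, lval (t.take k) ≠ -1 := fun k hk => Nat.find_min hex hk
  have hpos : ∀ k < c, 0 ≤ lval (t.take k) := by
    intro k hk
    have h1 := take_ge_neg_one hpre k
    have h2 := hmin k hk
    omega
  have hc1 : 1 ≤ c := by
    rcases Nat.eq_zero_or_pos c with h | h
    · exfalso; rw [h] at hc; simp at hc
    · exact h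
  have hcle : c ≤ t.length := Nat.find_le (by rw [List.take_length]; exact hsumt)
  have hk0 : c - 1 < t.length := by omega
  have hstep : lval (t.take c) = lval (t.take (c-1)) + (t.get ⟨c-1, hk0⟩).val := by
    have h := lval_take_succ t (c-1) hk0
    rwa [show c - 1 + 1 = c by omega] at h
  have hprev : 0 ≤ lval (t.take (c-1)) := hpos (c-1) (by omega)
  have hgetD : t.get ⟨c-1, hk0⟩ = Step.D := by
    rcases hget : t.get ⟨c-1, hk0⟩ with _ | _ | _ <;>
      rw [hget] at hstep <;> simp [Step.val] at hstep <;> omega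
  have hprev0 : lval (t.take (c-1)) = 0 := by
    rw [hgetD] at hstep; simp [Step.val] at hstep; omega
  have hdropsplit : t.drop (c-1) = Step.D :: t.drop c := by
    have h1 := List.drop_eq_getElem_cons hk0
    rw [show c - 1 + 1 = c by omega] at h1
    have hD' : t[c-1] = Step.D := hgetD
    rw [h1, hD']
  refine ⟨t.take (c-1), t.drop c, ?_, ?_, hprev0, ?_, ?_⟩
  · conv_lhs => rw [← List.take_append_drop (c-1) t]
    rw [hdropsplit]
  · intro k
    rw [List.take_take]
    exact hpos (min k (c-1)) (by omega)
  · intro k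
    have h1 : lval (t.take (c + k)) = lval (t.take c) + lval ((t.drop c).take k) := by
      rw [List.take_add, lval_append]
    have h2 := take_ge_neg_one hpre (c+k)
    rw [h1, hc] at h2
    omega
  · have h1 : lval (t.take c) + lval (t.drop c) = lval t := by
      rw [← lval_append, List.take_append_drop]
    rw [hc, hsumt] at h1
    omega

lemma head_not_D {v : List Step} (hv : ∀ k, 0 ≤ lval (v.take k)) :
    ∀ b ∈ v.head?, b ≠ Step.D := by
  cases v with
  | nil => simp
  | cons s l =>
    intro b hb hD
    simp at hb
    subst hb
    have h1 := hv 1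
    rw [hD] at h1
    simp [Step.val] at h1

lemma last_not_U {v : List Step} (hv : ∀ k, 0 ≤ lval (v.take k)) (hs : lval v = 0)
    (hne : v ≠ []) : ∀ x ∈ v.getLast?, x ≠ Step.U := by
  obtain ⟨v', x, rfl⟩ := (List.eq_nil_or_concat v).resolve_left hne
  simp only [List.concat_eq_append] at hv hs ⊢
  intro y hy hU
  rw [List.getLast?_concat] at hy
  have hyx : x = y := by simpa using hy
  subst hyx
  rw [hU] at hs hv
  have h2 := hv v'.length
  rw [List.take_append_of_le_length le_rfl, List.take_length] at h2
  have h4 : lval v' + (1:ℤ) = 0 := by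
    have h5 := hs
    simp [Step.val] at h5
    omega
  omega

lemma split_eq {v v' u u' : List Step}
    (hv : ∀ k, 0 ≤ lval (v.take k)) (hvs : lval v = 0)
    (hv' : ∀ k, 0 ≤ lval (v'.take k)) (hvs' : lval v' = 0)
    (h : v ++ Step.D :: u = v' ++ Step.D :: u') : v = v' ∧ u = u' := by
  have key : ∀ (a a' b b' : List Step),
      (∀ k, 0 ≤ lval (a.take k)) → lval a = 0 →
      (∀ k, 0 ≤ lval (a'.take k)) →
      ∀ w, a' = a ++ w → Step.D :: b = w ++ Step.D :: b' → w = [] := by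
    intro a a' b b' ha has ha' w hw1 hw2
    cases w with
    | nil => rfl
    | cons s w' =>
      exfalso
      have hsD : s = Step.D := by
        simp at hw2
        exact hw2.1.symm
      subst hsD
      have hp := ha' (a.length + 1)
      rw [hw1] at hp
      have he : ((a ++ Step.D :: w').take (a.length + 1)) = a ++ [Step.D] := by
        rw [List.take_append, List.take_of_length_le (by omega)]
        congr 1
        rw [show a.length + 1 - a.length = 1 by omega]
        rfl
      rw [he, lval_append, has, lval_cons, lval_nil] at hp
      simp [Step.val] at hp
  rcases List.append_eq_append_iff.mp h with ⟨w, hw1, hw2⟩ | ⟨w, hw1, hw2⟩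
  · have hw := key v v' u u' hv hvs hv' w hw1 hw2
    subst hw
    simp only [List.append_nil] at hw1
    subst hw1
    exact ⟨rfl, by simpa using h⟩
  · have hw := key v' v u' u hv' hvs' hv w hw1 hw2
    subst hw
    simp only [List.append_nil] at hw1
    subst hw1
    exact ⟨rfl, by simpa using h⟩


/-- The type of peakless Motzkin lists of length `n`. -/
def T (n : ℕ) : Type := {l : List Step // l.length = n ∧ Ok l}

instance (n : ℕ) : Finite (T n) := by
  unfold T; infer_instance

lemma ok_cons_F {t : List Step} (h : Ok t) : Ok (Step.F :: t) := by
  obtain ⟨h1, h2, h3⟩ := h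
  refine ⟨?_, ?_, ?_⟩
  · intro k
    cases k with
    | zero => simp
    | succ k =>
      rw [List.take_succ_cons, lval_cons]
      have := h1 k
      simp [Step.val]
      omega
  · rw [lval_cons]; simp [Step.val, h2]
  · unfold List.Chain'
    rw [List.isChain_cons]
    refine ⟨?_, h3⟩
    intro b _
    simp [R]

lemma ok_UvDu {v u : List Step} (hv : Ok v) (hu : Ok u) (hvne : v ≠ []) :
    Ok (Step.U :: v ++ Step.D :: u) := by
  obtain ⟨hv1, hv2, hv3⟩ := hv
  obtain ⟨hu1, hu2, hu3⟩ := hu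
  have hmid : ∀ k : ℕ, -1 ≤ lval ((v ++ Step.D :: u).take k) := by
    intro k
    rw [List.take_append, lval_append]
    by_cases hk : k ≤ v.length
    · have h1 : k - v.length = 0 := by omega
      rw [h1]
      have := hv1 k
      simp
      omega
    · rw [List.take_of_length_le (by omega), hv2]
      cases hkv : k - v.length with
      | zero => omega
      | succ k' =>
        rw [List.take_succ_cons, lval_cons]
        have := hu1 k'
        simp [Step.val]
        omega
  refine ⟨?_, ?_, ?_⟩
  · intro k
    cases k with
    | zero => simp
    | succ k =>
      have h0 : (Step.U :: v ++ Step.D :: u).take (k+1)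
          = Step.U :: (v ++ Step.D :: u).take k := by
        rfl
      rw [h0, lval_cons]
      have := hmid k
      simp [Step.val]
      omega
  · rw [show (Step.U :: v ++ Step.D :: u) = Step.U :: (v ++ Step.D :: u) from rfl,
      lval_cons, lval_append, lval_cons, hv2, hu2]
    simp [Step.val]
  · unfold List.Chain'
    rw [show (Step.U :: v ++ Step.D :: u) = (Step.U :: v) ++ (Step.D :: u) from rfl,
      List.isChain_append]
    refine ⟨?_, ?_, ?_⟩
    · rw [List.isChain_cons]
      refine ⟨?_, hv3⟩
      intro b hb
      have := head_not_D hv1 b hb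
      simp [R]
      exact this
    · rw [List.isChain_cons]
      exact ⟨fun b _ => by simp [R], hu3⟩
    · intro x hx y hy
      have hyD : y = Step.D := by
        simp at hy
        exact hy.symm
      subst hyD
      have hlast : (Step.U :: v).getLast? = v.getLast? := by
        cases v with
        | nil => exact absurd rfl hvne
        | cons a l => simp [List.getLast?_cons_cons]
      rw [hlast] at hx
      have := last_not_U hv1 hv2 hvne x hx
      simp [R]
      exact this

/-- The gluing map for the first-return decomposition. -/
def glue (n : ℕ) :
    (T n ⊕ (Σ j : Fin (n-1), T ((j:ℕ)+1) × T (n-2-(j:ℕ)))) → T (n+1)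
  | .inl t => ⟨Step.F :: t.1, by simp [t.2.1], ok_cons_F t.2.2⟩
  | .inr ⟨j, v, u⟩ => ⟨Step.U :: v.1 ++ Step.D :: u.1, by
      have hj := j.isLt
      have hv := v.2.1
      have hu := u.2.1
      simp
      omega,
      ok_UvDu v.2.2 u.2.2 (by
        intro hnil
        have := v.2.1
        rw [hnil] at this
        simp at this)⟩

lemma glue_injective (n : ℕ) : Function.Injective (glue n) := by
  rintro (t | ⟨j, v, u⟩) (t' | ⟨j', v', u'⟩) h
  · apply congrArg
    apply Subtype.ext
    have : Step.F :: t.1 = Step.F :: t'.1 := congrArg Subtype.val h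
    simpa using this
  · exfalso
    have : Step.F :: t.1 = Step.U :: v'.1 ++ Step.D :: u'.1 := congrArg Subtype.val h
    simp at this
  · exfalso
    have : Step.U :: v.1 ++ Step.D :: u.1 = Step.F :: t'.1 := congrArg Subtype.val h
    simp at this
  · have h0 : Step.U :: v.1 ++ Step.D :: u.1 = Step.U :: v'.1 ++ Step.D :: u'.1 :=
      congrArg Subtype.val h
    have h1 : v.1 ++ Step.D :: u.1 = v'.1 ++ Step.D :: u'.1 := by
      simpa using h0
    have h2 := split_eq v.2.2.1 v.2.2.2.1 v'.2.2.1 v'.2.2.2.1 h1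
    have hjj : j = j' := by
      apply Fin.ext
      have hl : v.1.length = v'.1.length := by rw [h2.1]
      rw [v.2.1, v'.2.1] at hl
      omega
    subst hjj
    have hvv : v = v' := Subtype.ext h2.1
    have huu : u = u' := Subtype.ext h2.2
    subst hvv
    subst huu
    rfl

lemma glue_surjective (n : ℕ) : Function.Surjective (glue n) := by
  rintro ⟨l, hlen, hok⟩
  obtain ⟨h1, h2, h3⟩ := hok
  cases l with
  | nil => simp at hlen
  | cons s t =>
    cases s with
    | D =>
      exfalso
      have := h1 1
      simp [List.take_succ_cons, Step.val] at this
    | F =>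
      refine ⟨.inl ⟨t, by simpa using hlen, ?_, ?_, ?_⟩, ?_⟩
      · intro k
        have := h1 (k+1)
        rw [List.take_succ_cons, lval_cons] at this
        simpa [Step.val] using this
      · have := h2
        rw [lval_cons] at this
        simpa [Step.val] using this
      · exact h3.tail
      · apply Subtype.ext
        rfl
    | U =>
      obtain ⟨v, u, hsplit, hvp, hvs, hup, hus⟩ := exists_split h1 h2
      have hvne : v ≠ [] := by
        intro hnil
        subst hnil
        simp at hsplit
        subst hsplit
        unfold List.Chain' at h3
        rw [List.isChain_cons_cons] at h3
        exact h3.1 ⟨rfl, rfl⟩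
      have hvchain : v.Chain' R := by
        apply h3.tail.prefix
        rw [hsplit]
        exact ⟨Step.D :: u, rfl⟩
      have huchain : u.Chain' R := by
        apply h3.suffix
        refine ⟨Step.U :: v ++ [Step.D], ?_⟩
        rw [hsplit]
        simp
      have hlv : 1 ≤ v.length := by
        cases v with
        | nil => exact absurd rfl hvne
        | cons a l => simp
      have hlen' : v.length + 1 + u.length = n := by
        have : t.length = n := by simpa using hlen
        rw [hsplit] at this
        simp at this
        omega
      have hjlt : v.length - 1 < n - 1 := by omega
      refine ⟨.inr ⟨⟨v.length - 1, hjlt⟩, ⟨v, ?_, hvp, hvs, hvchain⟩,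
        ⟨u, ?_, hup, hus, huchain⟩⟩, ?_⟩
      · simp
        omega
      · simp
        omega
      · apply Subtype.ext
        show Step.U :: v ++ Step.D :: u = Step.U :: t
        rw [hsplit]
        rfl
    
lemma card_sigma' {ι : Type} [Fintype ι] (f : ι → Type) [∀ i, Finite (f i)] :
    Nat.card (Σ i, f i) = ∑ i, Nat.card (f i) := by
  letI : ∀ i, Fintype (f i) := fun i => Fintype.ofFinite (f i)
  simp [Nat.card_eq_fintype_card, Fintype.card_sigma]

lemma card_T_eq (n : ℕ) : Nat.card (T n) = m n := (m_eq n).symm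

lemma m_rec (n : ℕ) :
    m (n+1) = m n + ∑ j ∈ Finset.range (n-1), m (j+1) * m (n-2-j) := by
  have he : Nat.card (T n ⊕ (Σ j : Fin (n-1), T ((j:ℕ)+1) × T (n-2-(j:ℕ))))
      = Nat.card (T (n+1)) :=
    Nat.card_congr (Equiv.ofBijective (glue n) ⟨glue_injective n, glue_surjective n⟩)
  rw [Nat.card_sum, card_sigma'] at he
  simp only [Nat.card_prod, card_T_eq] at he
  rw [← he, Fin.sum_univ_eq_sum_range (fun j => m (j+1) * m (n-2-j))]

lemma m_zero : m 0 = 1 := by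
  rw [m_eq]
  haveI : Unique {l : List Step // l.length = 0 ∧ Ok l} := {
    default := ⟨[], rfl, fun k => by simp, rfl, List.isChain_nil⟩
    uniq := fun x => Subtype.ext (List.length_eq_zero_iff.mp x.2.1)
  }
  exact Nat.card_unique


lemma m_one : m 1 = 1 := by
  have h := m_rec 0
  simpa [m_zero] using h

lemma m_two : m 2 = 1 := by
  have h := m_rec 1
  simpa [m_one] using h

lemma m_three : m 3 = 2 := by
  have h := m_rec 2
  simp [Finset.sum_range_one, m_one, m_zero, m_two] at h
  exact h

lemma m_four : m 4 = 4 := by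
  have h := m_rec 3
  simp [Finset.sum_range_succ, m_one, m_zero, m_two, m_three] at h
  exact h

open PowerSeries

noncomputable def Fm : PowerSeries ℤ := PowerSeries.mk fun k => (m k : ℤ)

@[simp] lemma coeff_Fm (k : ℕ) : coeff k Fm = (m k : ℤ) := coeff_mk k _

@[simp] lemma constantCoeff_Fm : constantCoeff Fm = (m 0 : ℤ) := rfl

lemma fun_eq : (1 - X + X^2) * Fm = X^2 * (Fm * Fm) + 1 := by
  ext k
  rw [show (1 - X + X^2 : ℤ⟦X⟧) * Fm = Fm - X^1 * Fm + X^2 * Fm by ring]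
  rw [map_add, map_sub, map_add, coeff_X_pow_mul', coeff_X_pow_mul', coeff_X_pow_mul',
    coeff_one]
  rcases k with _ | _ | k'
  · simp [m_zero]
  · simp [m_one, m_zero]
  · have h5 : (1:ℕ) ≤ k' + 1 + 1 := by omega
    have h6 : (2:ℕ) ≤ k' + 1 + 1 := by omega
    rw [if_pos h5, if_pos h6, if_pos h6, if_neg (by omega : ¬ (k' + 1 + 1 = 0))]
    have e1 : k' + 1 + 1 - 1 = k' + 1 := by omega
    have e2 : k' + 1 + 1 - 2 = k' := by omega
    rw [e1, e2]
    rw [PowerSeries.coeff_mul]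
    simp only [coeff_Fm]
    rw [Finset.Nat.sum_antidiagonal_eq_sum_range_succ_mk]
    rw [Finset.sum_range_succ']
    simp only []
    have hN : m (k'+2) = m (k'+1) + ∑ i ∈ Finset.range k', m (i+1) * m (k' - (i+1)) := by
      rw [m_rec (k'+1)]
      congr 1
      apply Finset.sum_congr (by norm_num) (fun i hi => ?_)
      have : k' + 1 - 2 - i = k' - (i+1) := by omega
      rw [this]
    have hZ : (m (k'+2) : ℤ)
        = m (k'+1) + ∑ i ∈ Finset.range k', (m (i+1) : ℤ) * m (k' - (i+1)) := by
      exact_mod_cast hN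
    simp only [m_zero]
    push_cast
    rw [show k' + 1 + 1 = k' + 2 by omega]
    rw [hZ]
    simp

lemma key_identity :
    (X - 2*X^2 - X^3 - 2*X^4 + X^5) * (d⁄dX ℤ Fm)
      = (X^3 + X^2 + 3*X - 2) * Fm + (2 - 2*X^2) := by
  have hE2 : (1 - X + X*X) * Fm = X*X*(Fm*Fm) + 1 := by linear_combination fun_eq
  have h2 := congrArg (d⁄dX ℤ) hE2
  simp only [map_add, map_sub, Derivation.leibniz, Derivation.map_one_eq_zero,
    derivative_X, smul_eq_mul, mul_one, one_mul, add_zero] at h2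
  linear_combination (2 - 2*X^2 + 4*X^2*Fm + 4*X^3*(d⁄dX ℤ Fm)) * fun_eq
    + (X*(1-X+X^2) - 2*X^3*Fm) * h2

lemma coeff_Xd_F (d k : ℕ) :
    coeff k (X^d * Fm) = if d ≤ k then (m (k-d) : ℤ) else 0 := by
  rw [coeff_X_pow_mul']
  split_ifs with h
  · simp
  · rfl

lemma coeff_Xd_G (d k : ℕ) :
    coeff k (X^d * (d⁄dX ℤ Fm))
      = if d ≤ k then (m (k-d+1) : ℤ) * ((k-d : ℕ) + 1 : ℤ) else 0 := by
  rw [coeff_X_pow_mul']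
  split_ifs with h
  · rw [PowerSeries.coeff_derivative]
    simp
  · rfl

lemma m_Prec (n : ℕ) :
    (n : ℤ) * m n - (2 * (n : ℤ) + 3) * m (n + 1) - ((n : ℤ) + 3) * m (n + 2)
      - (2 * (n : ℤ) + 9) * m (n + 3) + ((n : ℤ) + 6) * m (n + 4) = 0 := by
  have hc := congrArg (coeff (R := ℤ) (n+4)) key_identity
  have e1 : (X - 2*X^2 - X^3 - 2*X^4 + X^5 : ℤ⟦X⟧) * (d⁄dX ℤ Fm)
      = X^1*(d⁄dX ℤ Fm) - (X^2*(d⁄dX ℤ Fm) + X^2*(d⁄dX ℤ Fm)) - X^3*(d⁄dX ℤ Fm)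
        - (X^4*(d⁄dX ℤ Fm) + X^4*(d⁄dX ℤ Fm)) + X^5*(d⁄dX ℤ Fm) := by ring
  have e2 : ((X^3 + X^2 + 3*X - 2 : ℤ⟦X⟧) * Fm + (2 - 2*X^2) : ℤ⟦X⟧)
      = X^3*Fm + X^2*Fm + (X^1*Fm + X^1*Fm + X^1*Fm) - (X^0*Fm + X^0*Fm)
        + ((1 + 1 : ℤ⟦X⟧) - (X^2 + X^2)) := by ring
  rw [e1, e2] at hc
  simp only [map_add, map_sub, coeff_Xd_G, coeff_Xd_F, coeff_one, coeff_X_pow] at hc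
  simp only [if_pos (show (1:ℕ) ≤ n+4 from by omega),
    if_pos (show (2:ℕ) ≤ n+4 from by omega),
    if_pos (show (3:ℕ) ≤ n+4 from by omega),
    if_pos (show (4:ℕ) ≤ n+4 from by omega),
    if_pos (show (0:ℕ) ≤ n+4 from by omega),
    if_neg (show ¬ (n+4 = 0) from by omega),
    if_neg (show ¬ (n+4 = 2) from by omega)] at hc
  simp only [show n+4-1 = n+3 from by omega, show n+4-2 = n+2 from by omega,
    show n+4-3 = n+1 from by omega, show n+4-4 = n from by omega,
    show n+4-0 = n+4 from by omega, show n+3+1 = n+4 from by omega,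
    show n+2+1 = n+3 from by omega, show n+1+1 = n+2 from by omega] at hc
  rcases n with _ | n'
  · simp only [if_neg (show ¬ ((5:ℕ) ≤ 0+4) from by omega)] at hc
    norm_num [m_zero, m_one, m_two, m_three, m_four]
  · simp only [if_pos (show (5:ℕ) ≤ n'+1+4 from by omega),
      show n'+1+4-5 = n' from by omega] at hc
    push_cast at hc ⊢
    linear_combination hc

end PRaux

/-- `m(0) = m(1) = m(2) = 1`, `m(3) = 2`, and the four-term P-recurrence
`n·m(n) − (2n+3)·m(n+1) − (n+3)·m(n+2) − (2n+9)·m(n+3) + (n+6)·m(n+4) = 0` for all `n ≥ 0`. -/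
theorem peakless_P_recurrence :
    m 0 = 1 ∧ m 1 = 1 ∧ m 2 = 1 ∧ m 3 = 2 ∧
    ∀ n : ℕ,
      (n : ℤ) * m n - (2 * (n : ℤ) + 3) * m (n + 1) - ((n : ℤ) + 3) * m (n + 2)
        - (2 * (n : ℤ) + 9) * m (n + 3) + ((n : ℤ) + 6) * m (n + 4) = 0 :=
  ⟨PRaux.m_zero, PRaux.m_one, PRaux.m_two, PRaux.m_three, PRaux.m_Prec⟩
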